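/- In the formal power series ring in t over 𝒰_q^+, the following identities hold: 𝒲⁻(t) = E⁻(qξt)·𝒢̃(t) = 𝒢̃(t)·E⁻(q⁻¹ξt), and 𝒲⁺(t) = E⁺(q⁻¹ξt)·𝒢̃(t) = 𝒢̃(t)·E⁺(qξt). -/

import Mathlib

noncomputable section

/-- The commutator `[X,Y] = XY - YX`. -/
def br {A : Type*} [Ring A] (X Y : A) : A := X * Y - Y * X

/-- The `q`-commutator `[X,Y]_q = q·XY - q⁻¹·YX`. -/
def qbr {F : Type*} [Field F] (q : F) {A : Type*} [Ring A] [Algebra F A] (X Y : A) : A :=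
  q • (X * Y) - q⁻¹ • (Y * X)

/-- The element `E_δ = q⁻² W₁ W₀ - W₀ W₁`. -/
def Edel {F : Type*} [Field F] (q : F) {A : Type*} [Ring A] [Algebra F A] (W0 W1 : A) : A :=
  (q ^ 2)⁻¹ • (W1 * W0) - W0 * W1

/-- The elements `E_{nδ+α₀}`. -/
def Em {F : Type*} [Field F] (q : F) {A : Type*} [Ring A] [Algebra F A] (W0 W1 : A) : ℕ → A
  | 0 => W0
  | n + 1 => (q + q⁻¹)⁻¹ • br (Edel q W0 W1) (Em q W0 W1 n)

/-- The elements `E_{nδ+α₁}`. -/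
def Ep {F : Type*} [Field F] (q : F) {A : Type*} [Ring A] [Algebra F A] (W0 W1 : A) : ℕ → A
  | 0 => W1
  | n + 1 => (q + q⁻¹)⁻¹ • br (Ep q W0 W1 n) (Edel q W0 W1)

/-- The elements `E_{nδ}` (with `E_{0δ} = -(q-q⁻¹)⁻¹`). -/
def Ed {F : Type*} [Field F] (q : F) {A : Type*} [Ring A] [Algebra F A] (W0 W1 : A) : ℕ → A
  | 0 => (-(q - q⁻¹)⁻¹) • (1 : A)
  | n + 1 => (q ^ 2)⁻¹ • (Ep q W0 W1 n * W0) - W0 * Ep q W0 W1 n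

/-- The generating function with coefficients `a n`. -/
def ser {A : Type*} [Ring A] (a : ℕ → A) : PowerSeries A := PowerSeries.mk a

/-- The rescaled generating function `a(ct)`. -/
def serc {F : Type*} [Field F] {A : Type*} [Ring A] [Algebra F A] (c : F) (a : ℕ → A) :
    PowerSeries A := PowerSeries.mk fun n => c ^ n • a n

/-- The generating function `a(s)` in the first variable `s`. -/
def serS {A : Type*} [Ring A] (a : ℕ → A) : PowerSeries (PowerSeries A) :=
  PowerSeries.C (PowerSeries.mk a)

/-- The generating function `a(t)` in the second variable `t`. -/
def serT {A : Type*} [Ring A] (a : ℕ → A) : PowerSeries (PowerSeries A) :=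
  PowerSeries.mk fun n => PowerSeries.C (a n)

/-- The rescaled generating function `a(ct)` in the second variable `t`. -/
def serTc {F : Type*} [Field F] {A : Type*} [Ring A] [Algebra F A] (c : F) (a : ℕ → A) :
    PowerSeries (PowerSeries A) := PowerSeries.mk fun n => PowerSeries.C (c ^ n • a n)

/-- The variable `s` viewed in the two-variable power series ring. -/
def sVar (A : Type*) [Ring A] : PowerSeries (PowerSeries A) :=
  PowerSeries.C (PowerSeries.X : PowerSeries A)

/-- The variable `t` viewed in the two-variable power series ring. -/
def tVar (A : Type*) [Ring A] : PowerSeries (PowerSeries A) := PowerSeries.X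

/-- Elements of an `F`-algebra satisfying the defining relations of the alternating
central extension `𝒰_q^+`.  Here `Wm k = 𝒲_{-k}`, `Wp k = 𝒲_{k+1}`, `G k = 𝒢_k`,
`Gt k = 𝒢̃_k` (with `𝒢₀ = 𝒢̃₀ = 1`). -/
structure AltData (F : Type*) [Field F] (q : F) (A : Type*) [Ring A] [Algebra F A] where
  Wm : ℕ → A
  Wp : ℕ → A
  G : ℕ → A
  Gt : ℕ → A
  hG0 : G 0 = 1
  hGt0 : Gt 0 = 1
  rel1 : ∀ k : ℕ, br (Wm 0) (Wp k) = (1 - (q ^ 2)⁻¹) • (Gt (k + 1) - G (k + 1))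
  rel2 : ∀ k : ℕ, br (Wm k) (Wp 0) = (1 - (q ^ 2)⁻¹) • (Gt (k + 1) - G (k + 1))
  rel3 : ∀ k : ℕ, qbr q (Wm 0) (G (k + 1)) = (q - q⁻¹) • Wm (k + 1)
  rel4 : ∀ k : ℕ, qbr q (Gt (k + 1)) (Wm 0) = (q - q⁻¹) • Wm (k + 1)
  rel5 : ∀ k : ℕ, qbr q (G (k + 1)) (Wp 0) = (q - q⁻¹) • Wp (k + 1)
  rel6 : ∀ k : ℕ, qbr q (Wp 0) (Gt (k + 1)) = (q - q⁻¹) • Wp (k + 1)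
  rel7 : ∀ k l : ℕ, br (Wm k) (Wm l) = 0
  rel8 : ∀ k l : ℕ, br (Wp k) (Wp l) = 0
  rel9 : ∀ k l : ℕ, br (Wm k) (Wp l) + br (Wp k) (Wm l) = 0
  rel10 : ∀ k l : ℕ, br (Wm k) (G (l + 1)) + br (G (k + 1)) (Wm l) = 0
  rel11 : ∀ k l : ℕ, br (Wm k) (Gt (l + 1)) + br (Gt (k + 1)) (Wm l) = 0
  rel12 : ∀ k l : ℕ, br (Wp k) (G (l + 1)) + br (G (k + 1)) (Wp l) = 0
  rel13 : ∀ k l : ℕ, br (Wp k) (Gt (l + 1)) + br (Gt (k + 1)) (Wp l) = 0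
  rel14 : ∀ k l : ℕ, br (G (k + 1)) (G (l + 1)) = 0
  rel15 : ∀ k l : ℕ, br (Gt (k + 1)) (Gt (l + 1)) = 0
  rel16 : ∀ k l : ℕ, br (Gt (k + 1)) (G (l + 1)) + br (G (k + 1)) (Gt (l + 1)) = 0

/-- The scalar `ξ = -q²(q-q⁻¹)⁻²`. -/
def xi {F : Type*} [Field F] (q : F) : F := -(q ^ 2) * ((q - q⁻¹)⁻¹) ^ 2

/-- The central elements `𝒵ⁿ∨` (with `𝒵₀∨ = 1`). -/
def Zv {F : Type*} [Field F] (q : F) {A : Type*} [Ring A] [Algebra F A]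
    (D : AltData F q A) (n : ℕ) : A :=
  (∑ k ∈ Finset.range (n + 1), (q ^ ((n : ℤ) - 2 * (k : ℤ))) • (D.G k * D.Gt (n - k))) -
    q • ∑ k ∈ Finset.range n, (q ^ ((n : ℤ) - 1 - 2 * (k : ℤ))) • (D.Wm k * D.Wp (n - 1 - k))


namespace Stmt10Aux

variable {F : Type*} [Field F] {q : F} {A : Type*} [Ring A] [Algebra F A]

lemma solveA {c' : F} {X Y Z : A} (hq0 : q ≠ 0) (h : q • X - q⁻¹ • Y = c' • Z) :
    X = (q⁻¹ * q⁻¹) • Y + (q⁻¹ * c') • Z := by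
  have h2 : q • X = c' • Z + q⁻¹ • Y := sub_eq_iff_eq_add.mp h
  calc X = q⁻¹ • (q • X) := by rw [smul_smul, inv_mul_cancel₀ hq0, one_smul]
    _ = q⁻¹ • (c' • Z + q⁻¹ • Y) := by rw [h2]
    _ = (q⁻¹ * q⁻¹) • Y + (q⁻¹ * c') • Z := by
        rw [smul_add, smul_smul, smul_smul, add_comm]

lemma solveB {c' : F} {X Y Z : A} (hq0 : q ≠ 0) (h : q • X - q⁻¹ • Y = c' • Z) :
    Y = (q * q) • X - (q * c') • Z := by
  have h2 : q⁻¹ • Y = q • X - c' • Z := by rw [← h]; abel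
  calc Y = q • (q⁻¹ • Y) := by rw [smul_smul, mul_inv_cancel₀ hq0, one_smul]
    _ = q • (q • X - c' • Z) := by rw [h2]
    _ = (q * q) • X - (q * c') • Z := by rw [smul_sub, smul_smul, smul_smul]

variable (D : AltData F q A)

/-! Solved forms of the defining relations. -/

lemma relq3 (k : ℕ) : q • (D.Wm 0 * D.G (k+1)) - q⁻¹ • (D.G (k+1) * D.Wm 0)
    = (q - q⁻¹) • D.Wm (k+1) := by have h := D.rel3 k; simp only [qbr] at h; exact h

lemma relq4 (k : ℕ) : q • (D.Gt (k+1) * D.Wm 0) - q⁻¹ • (D.Wm 0 * D.Gt (k+1))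
    = (q - q⁻¹) • D.Wm (k+1) := by have h := D.rel4 k; simp only [qbr] at h; exact h

lemma relq5 (k : ℕ) : q • (D.G (k+1) * D.Wp 0) - q⁻¹ • (D.Wp 0 * D.G (k+1))
    = (q - q⁻¹) • D.Wp (k+1) := by have h := D.rel5 k; simp only [qbr] at h; exact h

lemma relq6 (k : ℕ) : q • (D.Wp 0 * D.Gt (k+1)) - q⁻¹ • (D.Gt (k+1) * D.Wp 0)
    = (q - q⁻¹) • D.Wp (k+1) := by have h := D.rel6 k; simp only [qbr] at h; exact h

lemma r1p (hq0 : q ≠ 0) (k : ℕ) :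
    D.Wm 0 * D.Gt (k+1)
      = (q*q) • (D.Gt (k+1) * D.Wm 0) - (q*(q - q⁻¹)) • D.Wm (k+1) :=
  solveB hq0 (relq4 D k)

lemma r1t (hq0 : q ≠ 0) (k : ℕ) (x : A) :
    D.Wm 0 * (D.Gt (k+1) * x)
      = ((q*q) • (D.Gt (k+1) * D.Wm 0) - (q*(q - q⁻¹)) • D.Wm (k+1)) * x := by
  rw [← mul_assoc, r1p D hq0 k]

lemma r1'p (hq0 : q ≠ 0) (k : ℕ) :
    D.Gt (k+1) * D.Wm 0
      = (q⁻¹*q⁻¹) • (D.Wm 0 * D.Gt (k+1)) + (q⁻¹*(q - q⁻¹)) • D.Wm (k+1) :=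
  solveA hq0 (relq4 D k)

lemma r2p (hq0 : q ≠ 0) (k : ℕ) :
    D.Wp 0 * D.Gt (k+1)
      = (q⁻¹*q⁻¹) • (D.Gt (k+1) * D.Wp 0) + (q⁻¹*(q - q⁻¹)) • D.Wp (k+1) :=
  solveA hq0 (relq6 D k)

lemma r2t (hq0 : q ≠ 0) (k : ℕ) (x : A) :
    D.Wp 0 * (D.Gt (k+1) * x)
      = ((q⁻¹*q⁻¹) • (D.Gt (k+1) * D.Wp 0) + (q⁻¹*(q - q⁻¹)) • D.Wp (k+1)) * x := by
  rw [← mul_assoc, r2p D hq0 k]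

lemma r3p (hq0 : q ≠ 0) (k : ℕ) :
    D.Wm 0 * D.G (k+1)
      = (q⁻¹*q⁻¹) • (D.G (k+1) * D.Wm 0) + (q⁻¹*(q - q⁻¹)) • D.Wm (k+1) :=
  solveA hq0 (relq3 D k)

lemma r4p (hq0 : q ≠ 0) (k : ℕ) :
    D.Wp 0 * D.G (k+1)
      = (q*q) • (D.G (k+1) * D.Wp 0) - (q*(q - q⁻¹)) • D.Wp (k+1) :=
  solveB hq0 (relq5 D k)

lemma r5p (k : ℕ) :
    D.Wm 0 * D.Wp k
      = D.Wp k * D.Wm 0 + (1 - (q^2)⁻¹) • (D.Gt (k+1) - D.G (k+1)) := by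
  have h := D.rel1 k; simp only [br] at h
  rw [← h]; abel

lemma r5t (k : ℕ) (x : A) :
    D.Wm 0 * (D.Wp k * x)
      = (D.Wp k * D.Wm 0 + (1 - (q^2)⁻¹) • (D.Gt (k+1) - D.G (k+1))) * x := by
  rw [← mul_assoc, r5p D k]

lemma r6p (k : ℕ) :
    D.Wp 0 * D.Wm k
      = D.Wm k * D.Wp 0 - (1 - (q^2)⁻¹) • (D.Gt (k+1) - D.G (k+1)) := by
  have h := D.rel2 k; simp only [br] at h
  rw [eq_sub_iff_add_eq, ← h]; abel

lemma r6t (k : ℕ) (x : A) :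
    D.Wp 0 * (D.Wm k * x)
      = (D.Wm k * D.Wp 0 - (1 - (q^2)⁻¹) • (D.Gt (k+1) - D.G (k+1))) * x := by
  rw [← mul_assoc, r6p D k]

lemma r7p (k : ℕ) : D.Wm 0 * D.Wm k = D.Wm k * D.Wm 0 := by
  have h := D.rel7 0 k; simp only [br] at h; exact sub_eq_zero.mp h

lemma r7t (k : ℕ) (x : A) : D.Wm 0 * (D.Wm k * x) = (D.Wm k * D.Wm 0) * x := by
  rw [← mul_assoc, r7p D k]

lemma r8p (k : ℕ) : D.Wp 0 * D.Wp k = D.Wp k * D.Wp 0 := by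
  have h := D.rel8 0 k; simp only [br] at h; exact sub_eq_zero.mp h

lemma r8t (k : ℕ) (x : A) : D.Wp 0 * (D.Wp k * x) = (D.Wp k * D.Wp 0) * x := by
  rw [← mul_assoc, r8p D k]

/-! `E_δ` commutes with every `𝒢̃_m`. -/

lemma ceg (hq0 : q ≠ 0) (m : ℕ) :
    Edel q (D.Wm 0) (D.Wp 0) * D.Gt m = D.Gt m * Edel q (D.Wm 0) (D.Wp 0) := by
  cases m with
  | zero => rw [D.hGt0, mul_one, one_mul]
  | succ k =>
    simp only [Edel, sub_mul, mul_sub, add_mul, mul_add, smul_mul_assoc, mul_smul_comm,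
      smul_sub, smul_add, smul_smul, mul_assoc,
      r1p D hq0 k, r1t D hq0 k, r2p D hq0 k, r2t D hq0 k,
      r5p D (k+1), r5t D (k+1), r6p D (k+1), r6t D (k+1)]
    match_scalars <;> (field_simp; try ring; try (simp only [← zpow_natCast q, inv_pow, ← zpow_neg, ← zpow_add₀ hq0]; norm_num))

lemma cegT (hq0 : q ≠ 0) (m : ℕ) (x : A) :
    D.Gt m * (Edel q (D.Wm 0) (D.Wp 0) * x) = Edel q (D.Wm 0) (D.Wp 0) * (D.Gt m * x) := by
  rw [← mul_assoc, ← ceg D hq0 m, mul_assoc]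

/-! The key commutators of `E_δ` with `𝒲_{-n}` and `𝒲_{n+1}`. -/

lemma lemC (hq0 : q ≠ 0) (n : ℕ) :
    Edel q (D.Wm 0) (D.Wp 0) * D.Wm n - D.Wm n * Edel q (D.Wm 0) (D.Wp 0)
      = ((1 - (q^2)⁻¹)^2 * (1 + (q^2)⁻¹)) • (D.Wm 0 * D.Gt (n+1) - D.Wm (n+1)) := by
  simp only [Edel, sub_mul, mul_sub, add_mul, mul_add, smul_mul_assoc, mul_smul_comm,
    smul_sub, smul_add, smul_smul, mul_assoc,
    r7p D n, r7t D n, r6p D n, r6t D n, r1p D hq0 n, r3p D hq0 n]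
  match_scalars <;> (field_simp; try ring; try (simp only [← zpow_natCast q, inv_pow, ← zpow_neg, ← zpow_add₀ hq0]; norm_num))

lemma lemC' (hq0 : q ≠ 0) (n : ℕ) :
    D.Wp n * Edel q (D.Wm 0) (D.Wp 0) - Edel q (D.Wm 0) (D.Wp 0) * D.Wp n
      = ((1 - (q^2)⁻¹)^2 * (1 + (q^2)⁻¹)) • (D.Gt (n+1) * D.Wp 0 - D.Wp (n+1)) := by
  simp only [Edel, sub_mul, mul_sub, add_mul, mul_add, smul_mul_assoc, mul_smul_comm,
    smul_sub, smul_add, smul_smul, mul_assoc,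
    r8p D n, r8t D n, r5p D n, r5t D n, r2p D hq0 n, r4p D hq0 n]
  match_scalars <;> (field_simp; try ring; try (simp only [← zpow_natCast q, inv_pow, ← zpow_neg, ← zpow_add₀ hq0]; norm_num))

end Stmt10Aux

namespace Stmt10Aux

variable {F : Type*} [Field F] {q : F}

lemma hden1 (hq0 : q ≠ 0) (hc : q - q⁻¹ ≠ 0) : q^2 - 1 ≠ 0 := by
  have e : (q - q⁻¹) * q = q^2 - 1 := by
    rw [sub_mul, inv_mul_cancel₀ hq0, pow_two]
  exact e ▸ mul_ne_zero hc hq0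

lemma hden2 (hq0 : q ≠ 0) (hqq : q + q⁻¹ ≠ 0) : q^2 + 1 ≠ 0 := by
  have e : (q + q⁻¹) * q = q^2 + 1 := by
    rw [add_mul, inv_mul_cancel₀ hq0, pow_two]
  exact e ▸ mul_ne_zero hqq hq0

lemma inv1 (hq0 : q ≠ 0) : (q - q⁻¹)⁻¹ = (q^2 - 1)⁻¹ * q := by
  rw [show q - q⁻¹ = (q^2 - 1) * q⁻¹ by
    rw [sub_mul, one_mul, pow_two, mul_assoc, mul_inv_cancel₀ hq0, mul_one]]
  rw [mul_inv, inv_inv]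

lemma inv2 (hq0 : q ≠ 0) : (q + q⁻¹)⁻¹ = (q^2 + 1)⁻¹ * q := by
  rw [show q + q⁻¹ = (q^2 + 1) * q⁻¹ by
    rw [add_mul, one_mul, pow_two, mul_assoc, mul_inv_cancel₀ hq0, mul_one]]
  rw [mul_inv, inv_inv]

lemma sc1 (hq0 : q ≠ 0) (hc : q - q⁻¹ ≠ 0) (hqq : q + q⁻¹ ≠ 0) :
    (q * xi q) * (q + q⁻¹)⁻¹ * ((1 - (q^2)⁻¹)^2 * (1 + (q^2)⁻¹)) = -1 := by
  have h2 := hden1 hq0 hc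
  have h3 := hden2 hq0 hqq
  rw [xi, inv1 hq0, inv2 hq0]
  field_simp

lemma sc2 (hq0 : q ≠ 0) (hc : q - q⁻¹ ≠ 0) (hqq : q + q⁻¹ ≠ 0) :
    (q⁻¹ * xi q) * (q + q⁻¹)⁻¹ * ((1 - (q^2)⁻¹)^2 * (1 + (q^2)⁻¹)) = -(q⁻¹ * q⁻¹) := by
  have e0 : q⁻¹ * xi q = (q⁻¹ * q⁻¹) * (q * xi q) := by
    have e1 : (q⁻¹ * q⁻¹) * (q * xi q) = (q⁻¹ * (q⁻¹ * q)) * xi q := by ring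
    rw [e1, inv_mul_cancel₀ hq0, mul_one]
  calc (q⁻¹ * xi q) * (q + q⁻¹)⁻¹ * ((1 - (q^2)⁻¹)^2 * (1 + (q^2)⁻¹))
      = (q⁻¹ * q⁻¹) * ((q * xi q) * (q + q⁻¹)⁻¹ * ((1 - (q^2)⁻¹)^2 * (1 + (q^2)⁻¹))) := by
        rw [e0]; ring
    _ = -(q⁻¹ * q⁻¹) := by rw [sc1 hq0 hc hqq]; ring

end Stmt10Aux

namespace Stmt10Aux

variable {F : Type*} [Field F] {q : F} {A : Type*} [Ring A] [Algebra F A]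
variable (D : AltData F q A)

lemma key1 (hq0 : q ≠ 0) (hc : q - q⁻¹ ≠ 0) (hqq : q + q⁻¹ ≠ 0) (n : ℕ) :
    ∑ k ∈ Finset.range (n+1),
      ((q * xi q) ^ k • Em q (D.Wm 0) (D.Wp 0) k) * D.Gt (n - k) = D.Wm n := by
  induction n with
  | zero => simp [Em, D.hGt0]
  | succ n ih =>
    rw [Finset.sum_range_succ']
    have hterm : ∀ i ∈ Finset.range (n+1),
        ((q * xi q) ^ (i+1) • Em q (D.Wm 0) (D.Wp 0) (i+1)) * D.Gt (n + 1 - (i+1))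
          = ((q * xi q) * (q + q⁻¹)⁻¹) •
             (Edel q (D.Wm 0) (D.Wp 0) *
                (((q * xi q) ^ i • Em q (D.Wm 0) (D.Wp 0) i) * D.Gt (n - i))
               - (((q * xi q) ^ i • Em q (D.Wm 0) (D.Wp 0) i) * D.Gt (n - i)) *
                  Edel q (D.Wm 0) (D.Wp 0)) := by
      intro i _
      have hidx : n + 1 - (i+1) = n - i := by omega
      rw [hidx]
      rw [show Em q (D.Wm 0) (D.Wp 0) (i+1)
            = (q + q⁻¹)⁻¹ • br (Edel q (D.Wm 0) (D.Wp 0)) (Em q (D.Wm 0) (D.Wp 0) i) from rfl]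
      simp only [br, smul_sub, smul_smul, smul_mul_assoc, mul_smul_comm, sub_mul, mul_assoc]
      rw [ceg D hq0 (n - i)]
      match_scalars <;> ring
    rw [Finset.sum_congr rfl hterm, ← Finset.smul_sum, Finset.sum_sub_distrib,
      ← Finset.mul_sum, ← Finset.sum_mul, ih, lemC D hq0 n, smul_smul,
      sc1 hq0 hc hqq, neg_one_smul]
    simp only [pow_zero, one_smul, Nat.sub_zero]
    rw [show Em q (D.Wm 0) (D.Wp 0) 0 = D.Wm 0 from rfl]
    abel

lemma key2 (hq0 : q ≠ 0) (hc : q - q⁻¹ ≠ 0) (hqq : q + q⁻¹ ≠ 0) (n : ℕ) :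
    ∑ k ∈ Finset.range (n+1),
      D.Gt (n - k) * ((q⁻¹ * xi q) ^ k • Em q (D.Wm 0) (D.Wp 0) k) = D.Wm n := by
  induction n with
  | zero => simp [Em, D.hGt0]
  | succ n ih =>
    rw [Finset.sum_range_succ']
    have hterm : ∀ i ∈ Finset.range (n+1),
        D.Gt (n + 1 - (i+1)) * ((q⁻¹ * xi q) ^ (i+1) • Em q (D.Wm 0) (D.Wp 0) (i+1))
          = ((q⁻¹ * xi q) * (q + q⁻¹)⁻¹) •
             (Edel q (D.Wm 0) (D.Wp 0) *
                (D.Gt (n - i) * ((q⁻¹ * xi q) ^ i • Em q (D.Wm 0) (D.Wp 0) i))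
               - (D.Gt (n - i) * ((q⁻¹ * xi q) ^ i • Em q (D.Wm 0) (D.Wp 0) i)) *
                  Edel q (D.Wm 0) (D.Wp 0)) := by
      intro i _
      have hidx : n + 1 - (i+1) = n - i := by omega
      rw [hidx]
      rw [show Em q (D.Wm 0) (D.Wp 0) (i+1)
            = (q + q⁻¹)⁻¹ • br (Edel q (D.Wm 0) (D.Wp 0)) (Em q (D.Wm 0) (D.Wp 0) i) from rfl]
      simp only [br, smul_sub, smul_smul, smul_mul_assoc, mul_smul_comm, mul_sub, sub_mul,
        mul_assoc]
      rw [cegT D hq0 (n - i) (Em q (D.Wm 0) (D.Wp 0) i)]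
      match_scalars <;> ring
    rw [Finset.sum_congr rfl hterm, ← Finset.smul_sum, Finset.sum_sub_distrib,
      ← Finset.mul_sum, ← Finset.sum_mul, ih, lemC D hq0 n, smul_smul,
      sc2 hq0 hc hqq]
    simp only [pow_zero, one_smul, Nat.sub_zero]
    rw [show Em q (D.Wm 0) (D.Wp 0) 0 = D.Wm 0 from rfl]
    rw [r1'p D hq0 n]
    match_scalars <;> (field_simp; try ring)

lemma key3 (hq0 : q ≠ 0) (hc : q - q⁻¹ ≠ 0) (hqq : q + q⁻¹ ≠ 0) (n : ℕ) :
    ∑ k ∈ Finset.range (n+1),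
      ((q⁻¹ * xi q) ^ k • Ep q (D.Wm 0) (D.Wp 0) k) * D.Gt (n - k) = D.Wp n := by
  induction n with
  | zero => simp [Ep, D.hGt0]
  | succ n ih =>
    rw [Finset.sum_range_succ']
    have hterm : ∀ i ∈ Finset.range (n+1),
        ((q⁻¹ * xi q) ^ (i+1) • Ep q (D.Wm 0) (D.Wp 0) (i+1)) * D.Gt (n + 1 - (i+1))
          = ((q⁻¹ * xi q) * (q + q⁻¹)⁻¹) •
             ((((q⁻¹ * xi q) ^ i • Ep q (D.Wm 0) (D.Wp 0) i) * D.Gt (n - i)) *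
                  Edel q (D.Wm 0) (D.Wp 0)
               - Edel q (D.Wm 0) (D.Wp 0) *
                (((q⁻¹ * xi q) ^ i • Ep q (D.Wm 0) (D.Wp 0) i) * D.Gt (n - i))) := by
      intro i _
      have hidx : n + 1 - (i+1) = n - i := by omega
      rw [hidx]
      rw [show Ep q (D.Wm 0) (D.Wp 0) (i+1)
            = (q + q⁻¹)⁻¹ • br (Ep q (D.Wm 0) (D.Wp 0) i) (Edel q (D.Wm 0) (D.Wp 0)) from rfl]
      simp only [br, smul_sub, smul_smul, smul_mul_assoc, mul_smul_comm, sub_mul, mul_assoc]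
      rw [ceg D hq0 (n - i)]
      match_scalars <;> ring
    rw [Finset.sum_congr rfl hterm, ← Finset.smul_sum, Finset.sum_sub_distrib,
      ← Finset.sum_mul, ← Finset.mul_sum, ih, lemC' D hq0 n, smul_smul,
      sc2 hq0 hc hqq]
    simp only [pow_zero, one_smul, Nat.sub_zero]
    rw [show Ep q (D.Wm 0) (D.Wp 0) 0 = D.Wp 0 from rfl]
    rw [r2p D hq0 n]
    match_scalars <;> (field_simp; try ring)

lemma key4 (hq0 : q ≠ 0) (hc : q - q⁻¹ ≠ 0) (hqq : q + q⁻¹ ≠ 0) (n : ℕ) :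
    ∑ k ∈ Finset.range (n+1),
      D.Gt (n - k) * ((q * xi q) ^ k • Ep q (D.Wm 0) (D.Wp 0) k) = D.Wp n := by
  induction n with
  | zero => simp [Ep, D.hGt0]
  | succ n ih =>
    rw [Finset.sum_range_succ']
    have hterm : ∀ i ∈ Finset.range (n+1),
        D.Gt (n + 1 - (i+1)) * ((q * xi q) ^ (i+1) • Ep q (D.Wm 0) (D.Wp 0) (i+1))
          = ((q * xi q) * (q + q⁻¹)⁻¹) •
             ((D.Gt (n - i) * ((q * xi q) ^ i • Ep q (D.Wm 0) (D.Wp 0) i)) *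
                  Edel q (D.Wm 0) (D.Wp 0)
               - Edel q (D.Wm 0) (D.Wp 0) *
                (D.Gt (n - i) * ((q * xi q) ^ i • Ep q (D.Wm 0) (D.Wp 0) i))) := by
      intro i _
      have hidx : n + 1 - (i+1) = n - i := by omega
      rw [hidx]
      rw [show Ep q (D.Wm 0) (D.Wp 0) (i+1)
            = (q + q⁻¹)⁻¹ • br (Ep q (D.Wm 0) (D.Wp 0) i) (Edel q (D.Wm 0) (D.Wp 0)) from rfl]
      simp only [br, smul_sub, smul_smul, smul_mul_assoc, mul_smul_comm, mul_sub, sub_mul,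
        mul_assoc]
      rw [cegT D hq0 (n - i) (Ep q (D.Wm 0) (D.Wp 0) i)]
      match_scalars <;> ring
    rw [Finset.sum_congr rfl hterm, ← Finset.smul_sum, Finset.sum_sub_distrib,
      ← Finset.sum_mul, ← Finset.mul_sum, ih, lemC' D hq0 n, smul_smul,
      sc1 hq0 hc hqq, neg_one_smul]
    simp only [pow_zero, one_smul, Nat.sub_zero]
    rw [show Ep q (D.Wm 0) (D.Wp 0) 0 = D.Wp 0 from rfl]
    abel

end Stmt10Aux

/-- `𝒲⁻(t) = E⁻(qξt)𝒢̃(t) = 𝒢̃(t)E⁻(q⁻¹ξt)` and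
`𝒲⁺(t) = E⁺(q⁻¹ξt)𝒢̃(t) = 𝒢̃(t)E⁺(qξt)` in the power series ring in `t` over `𝒰_q^+`. -/
theorem stmt10 {F : Type*} [Field F] (q : F) (hq0 : q ≠ 0)
    (hq : ∀ n : ℕ, 0 < n → q ^ n ≠ 1)
    {A : Type*} [Ring A] [Algebra F A] (D : AltData F q A) :
    ser D.Wm = serc (q * xi q) (Em q (D.Wm 0) (D.Wp 0)) * ser D.Gt ∧
    ser D.Wm = ser D.Gt * serc (q⁻¹ * xi q) (Em q (D.Wm 0) (D.Wp 0)) ∧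
    ser D.Wp = serc (q⁻¹ * xi q) (Ep q (D.Wm 0) (D.Wp 0)) * ser D.Gt ∧
    ser D.Wp = ser D.Gt * serc (q * xi q) (Ep q (D.Wm 0) (D.Wp 0)) := by
  have hq2 : q ^ 2 ≠ 1 := hq 2 (by norm_num)
  have hq4 : q ^ 4 ≠ 1 := hq 4 (by norm_num)
  have hc : q - q⁻¹ ≠ 0 := by
    intro h
    apply hq2
    have h2 := congrArg (· * q) h
    simp only [sub_mul, zero_mul, inv_mul_cancel₀ hq0] at h2
    rw [pow_two]
    exact sub_eq_zero.mp h2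
  have hqq : q + q⁻¹ ≠ 0 := by
    intro h
    apply hq4
    have h2 := congrArg (· * q) h
    simp only [add_mul, zero_mul, inv_mul_cancel₀ hq0] at h2
    have h3 : q * q = -1 := eq_neg_of_add_eq_zero_left h2
    calc q ^ 4 = (q * q) ^ 2 := by ring
      _ = 1 := by rw [h3]; ring
  refine ⟨?_, ?_, ?_, ?_⟩
  · apply PowerSeries.ext; intro n
    simp only [ser, serc]
    rw [PowerSeries.coeff_mul]
    simp only [PowerSeries.coeff_mk]
    rw [Finset.Nat.sum_antidiagonal_eq_sum_range_succ_mk]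
    exact (Stmt10Aux.key1 D hq0 hc hqq n).symm
  · apply PowerSeries.ext; intro n
    simp only [ser, serc]
    rw [PowerSeries.coeff_mul]
    simp only [PowerSeries.coeff_mk]
    rw [Finset.Nat.sum_antidiagonal_eq_sum_range_succ_mk]
    rw [← Stmt10Aux.key2 D hq0 hc hqq n]
    rw [← Finset.sum_range_reflect]
    apply Finset.sum_congr rfl
    intro k hk
    have hk' : k ≤ n := Nat.lt_succ_iff.mp (Finset.mem_range.mp hk)
    have e1 : n + 1 - 1 - k = n - k := by omega
    rw [e1, Nat.sub_sub_self hk']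
  · apply PowerSeries.ext; intro n
    simp only [ser, serc]
    rw [PowerSeries.coeff_mul]
    simp only [PowerSeries.coeff_mk]
    rw [Finset.Nat.sum_antidiagonal_eq_sum_range_succ_mk]
    exact (Stmt10Aux.key3 D hq0 hc hqq n).symm
  · apply PowerSeries.ext; intro n
    simp only [ser, serc]
    rw [PowerSeries.coeff_mul]
    simp only [PowerSeries.coeff_mk]
    rw [Finset.Nat.sum_antidiagonal_eq_sum_range_succ_mk]
    rw [← Stmt10Aux.key4 D hq0 hc hqq n]
    rw [← Finset.sum_range_reflect]
    apply Finset.sum_congr rfl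
    intro k hk
    have hk' : k ≤ n := Nat.lt_succ_iff.mp (Finset.mem_range.mp hk)
    have e1 : n + 1 - 1 - k = n - k := by omega
    rw [e1, Nat.sub_sub_self hk']
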